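/- With notation as in the random model, for 1 ≤ j ≤ (log_b n)/2, the expected number of (2j-1)-th subpowers of b in [n]_p lying at even distance from the smallest vertex of their component in D[[n]_p] equals ((b-1)/(b(1+p)))·p·n·(1/b^{2j-1} − (p/b)^{2j-1}·p) up to an additive error of at most 1. -/

import Mathlib

open MeasureTheory Finset
open scoped Classical

/-- The Bernoulli(p) measure on `Bool`. -/
noncomputable def bern (p : ℝ) : Measure Bool :=
  ENNReal.ofReal p • Measure.dirac true + ENNReal.ofReal (1 - p) • Measure.dirac false

/-- The law of the random subset `[n]_p`, as the product of `n` Bernoulli(p) measures. -/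
noncomputable def randMeasure (n : ℕ) (p : ℝ) : Measure (Fin n → Bool) :=
  Measure.pi fun _ => bern p

/-- The realization of the random subset `[n]_p ⊆ {1,...,n}` from a sample `ω`. -/
noncomputable def randSet (n : ℕ) (ω : Fin n → Bool) : Finset ℕ :=
  (Finset.univ.filter fun i : Fin n => ω i = true).image fun i => (i : ℕ) + 1

/-- `k` is an `i`-th subpower of `b` if `k = b^i · l` with `b ∤ l`. -/
def isSubpower (b i k : ℕ) : Prop := ∃ l : ℕ, k = b ^ i * l ∧ ¬ b ∣ l

/-- `v` lies in `S` at even distance from the smallest vertex of its component in the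
subgraph of `D` induced on `S`, where `D` has arcs `(x,y)` with `b*x = a*y`:
there is a directed path `c 0 → ⋯ → c k = v` of even length inside `S` such that
`c 0` has no in-neighbour inside `S`. -/
def evenDist (a b : ℕ) (S : Finset ℕ) (v : ℕ) : Prop :=
  ∃ (k : ℕ) (c : Fin (k + 1) → ℕ), Even k ∧ c (Fin.last k) = v ∧
    (∀ i, c i ∈ S) ∧
    (∀ i : Fin k, b * c i.castSucc = a * c i.succ) ∧
    ∀ u : ℕ, b * u = a * c 0 → u ∉ S

/-- `|T*_i|`: the number of `i`-th subpowers of `b` in `S = [n]_p` lying at even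
distance from the smallest vertex of their component in `D[S]`. -/
noncomputable def TstarCard (a b n i : ℕ) (S : Finset ℕ) : ℕ :=
  ((Finset.Icc 1 n).filter fun v => isSubpower b i v ∧ evenDist a b S v).card

/-- For `1 ≤ j ≤ (log_b n)/2`, the expected number of `(2j-1)`-th subpowers of `b` in
`[n]_p` lying at even distance from the smallest vertex of their component in
`D[[n]_p]` equals `((b-1)/(b(1+p)))·p·n·(1/b^{2j-1} − (p/b)^{2j-1}·p)` up to an
additive error of at most 1. -/
lemma bern_apply (p : ℝ) (s : Set Bool) :
    bern p s = (if true ∈ s then ENNReal.ofReal p else 0)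
      + (if false ∈ s then ENNReal.ofReal (1 - p) else 0) := by
  simp [bern, Measure.dirac_apply' _ (Set.to_countable s).measurableSet,
    Set.indicator_apply]

lemma bern_true (p : ℝ) : bern p {true} = ENNReal.ofReal p := by
  simp [bern_apply]

lemma bern_false (p : ℝ) : bern p {false} = ENNReal.ofReal (1 - p) := by
  simp [bern_apply]

lemma bern_prob {p : ℝ} (h0 : 0 ≤ p) (h1 : p ≤ 1) : IsProbabilityMeasure (bern p) := by
  constructor
  rw [bern_apply]
  simp only [Set.mem_univ, if_true]
  rw [← ENNReal.ofReal_add h0 (by linarith), ← ENNReal.ofReal_one]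
  norm_num

/-- measure of a cylinder pattern -/
lemma pattern_measure (n : ℕ) {p : ℝ} (h0 : 0 ≤ p) (h1 : p ≤ 1) (A B : Finset (Fin n))
    (hAB : Disjoint A B) :
    randMeasure n p {ω | (∀ i ∈ A, ω i = true) ∧ (∀ i ∈ B, ω i = false)}
      = ENNReal.ofReal p ^ A.card * ENNReal.ofReal (1 - p) ^ B.card := by
  haveI : IsProbabilityMeasure (bern p) := bern_prob h0 h1
  have hset : {ω : Fin n → Bool | (∀ i ∈ A, ω i = true) ∧ (∀ i ∈ B, ω i = false)}
      = Set.pi Set.univ (fun i => if i ∈ A then {true} else if i ∈ B then ({false} : Set Bool) else Set.univ) := by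
    ext ω
    simp only [Set.mem_setOf_eq, Set.mem_pi, Set.mem_univ, forall_true_left]
    constructor
    · rintro ⟨hA, hB⟩ i
      by_cases hiA : i ∈ A
      · simp [hiA, hA i hiA]
      · by_cases hiB : i ∈ B
        · simp [hiA, hiB, hB i hiB]
        · simp [hiA, hiB]
    · intro h
      constructor
      · intro i hi; have := h i; simpa [hi] using this
      · intro i hi; have hiA : i ∉ A := fun hA => (hAB.forall_ne_finset hA hi) rfl
        have := h i; simpa [hi, hiA] using this
  rw [hset, randMeasure, Measure.pi_pi]
  have hsub : A ⊆ Finset.univ := subset_univ A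
  rw [← Finset.prod_sdiff hsub]
  have h2 : B ⊆ Finset.univ \ A := by
    intro i hi
    simp only [mem_sdiff, mem_univ, true_and]
    exact fun hA => (hAB.forall_ne_finset hA hi) rfl
  rw [← Finset.prod_sdiff h2]
  have e1 : ∀ i ∈ A, bern p (if i ∈ A then {true} else if i ∈ B then ({false} : Set Bool) else Set.univ) = ENNReal.ofReal p := by
    intro i hi; simp [hi, bern_true]
  have e2 : ∀ i ∈ B, bern p (if i ∈ A then {true} else if i ∈ B then ({false} : Set Bool) else Set.univ) = ENNReal.ofReal (1 - p) := by
    intro i hi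
    have hiA : i ∉ A := fun hA => (hAB.forall_ne_finset hA hi) rfl
    simp [hi, hiA, bern_false]
  have e3 : ∀ i ∈ (Finset.univ \ A) \ B, bern p (if i ∈ A then {true} else if i ∈ B then ({false} : Set Bool) else Set.univ) = 1 := by
    intro i hi
    simp only [mem_sdiff, mem_univ, true_and] at hi
    simp only [hi.1, hi.2, if_false]
    simp [bern_apply, ← ENNReal.ofReal_add h0 (by linarith : (0:ℝ) ≤ 1 - p)]
  rw [Finset.prod_congr rfl e1, Finset.prod_congr rfl e2, Finset.prod_congr rfl e3,
    Finset.prod_const, Finset.prod_const, Finset.prod_const, one_pow, one_mul, mul_comm]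

/-- the chain vertex `x t = b^(i-t) a^t l`. -/
def chainX (a b i l t : ℕ) : ℕ := b ^ (i - t) * a ^ t * l

lemma chain_arc {a b : ℕ} (i l : ℕ) {t : ℕ} (ht : t + 1 ≤ i) :
    b * chainX a b i l (t + 1) = a * chainX a b i l t := by
  unfold chainX
  have h1 : i - t = (i - (t+1)) + 1 := by omega
  rw [h1, pow_succ, pow_succ]
  ring

lemma path_eq {a b l : ℕ} (i k : ℕ) (ha : 0 < a) (hb : 0 < b) (hco : Nat.Coprime a b)
    (hl : ¬ b ∣ l) (c : Fin (k + 1) → ℕ) (hlast : c (Fin.last k) = b ^ i * l)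
    (harc : ∀ m : Fin k, b * c m.castSucc = a * c m.succ) :
    ∀ s, s ≤ k → s ≤ i ∧ c ⟨k - s, by omega⟩ = chainX a b i l s := by
  intro s
  induction s with
  | zero =>
    intro _
    refine ⟨Nat.zero_le _, ?_⟩
    have : (⟨k - 0, by omega⟩ : Fin (k+1)) = Fin.last k := by
      apply Fin.ext; simp
    rw [this, hlast]; unfold chainX; simp
  | succ s ih =>
    intro hs
    obtain ⟨hsi, hcs⟩ := ih (by omega)
    have hm : k - s - 1 < k := by omega
    have harc' := harc ⟨k - s - 1, hm⟩
    have hcast : (⟨k - s - 1, hm⟩ : Fin k).castSucc = (⟨k - (s+1), by omega⟩ : Fin (k+1)) := by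
      apply Fin.ext; simp; omega
    have hsucc : (⟨k - s - 1, hm⟩ : Fin k).succ = (⟨k - s, by omega⟩ : Fin (k+1)) := by
      apply Fin.ext; simp; omega
    rw [hcast, hsucc, hcs] at harc'
    -- first: s < i
    have hsi' : s < i := by
      by_contra hcon
      have hseq : s = i := by omega
      subst hseq
      unfold chainX at harc'
      simp only [Nat.sub_self, pow_zero, one_mul] at harc'
      have hdvd : b ∣ a * (a ^ s * l) := ⟨_, harc'.symm⟩
      have hco' : Nat.Coprime b (a * a ^ s) := by
        have : Nat.Coprime b a := hco.symm
        exact Nat.Coprime.mul_right this (Nat.Coprime.pow_right _ this)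
      have : b ∣ l := by
        have h2 : b ∣ (a * a ^ s) * l := by rw [mul_assoc]; exact hdvd
        exact (Nat.Coprime.dvd_of_dvd_mul_left hco' h2)
      exact hl this
    refine ⟨by omega, ?_⟩
    have key : a * chainX a b i l s = b * chainX a b i l (s + 1) := (chain_arc i l (by omega)).symm
    rw [key] at harc'
    exact Nat.eq_of_mul_eq_mul_left hb harc'

lemma evenDist_iff {a b : ℕ} (ha : 0 < a) (hab : a < b) (hco : Nat.Coprime a b)
    {l : ℕ} (hl : ¬ b ∣ l) (S : Finset ℕ) {i : ℕ} (hi : Odd i) :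
    evenDist a b S (b ^ i * l) ↔
      ∃ k, Even k ∧ k < i ∧ (∀ t ≤ k, chainX a b i l t ∈ S) ∧ chainX a b i l (k + 1) ∉ S := by
  have hb : 0 < b := lt_trans ha hab
  constructor
  · rintro ⟨k, c, hev, hlast, hmem, harc, hmin⟩
    have hpe := path_eq i k ha hb hco hl c hlast harc
    have hki : k ≤ i := (hpe k le_rfl).1
    have hklt : k < i := by
      rcases Nat.lt_or_ge k i with h | h
      · exact h
      · exfalso
        have : k = i := by omega
        subst this
        exact (Nat.not_even_iff_odd.mpr hi) hev
    refine ⟨k, hev, hklt, ?_, ?_⟩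
    · intro t ht
      have := (hpe t ht).2
      rw [← this]; exact hmem _
    · have hc0 : c 0 = chainX a b i l k := by
        have := (hpe k le_rfl).2
        have h0 : (⟨k - k, by omega⟩ : Fin (k+1)) = 0 := by apply Fin.ext; simp
        rwa [h0] at this
      apply hmin
      rw [hc0]
      exact chain_arc i l (by omega)
  · rintro ⟨k, hev, hklt, hmem, hnot⟩
    refine ⟨k, fun t => chainX a b i l (k - t.val), hev, ?_, ?_, ?_, ?_⟩
    · simp only [Fin.val_last, Nat.sub_self]
      unfold chainX; simp
    · intro t; exact hmem _ (by omega)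
    · intro m
      have h1 : k - (m.castSucc).val = (k - m.succ.val) + 1 := by
        have := m.isLt; simp [Fin.val_succ]; omega
      show b * chainX a b i l (k - m.castSucc.val) = a * chainX a b i l (k - m.succ.val)
      rw [h1]
      exact chain_arc i l (by have := m.isLt; omega)
    · intro u hu
      simp only [Fin.val_zero, Nat.sub_zero] at hu
      have harc2 : b * chainX a b i l (k + 1) = a * chainX a b i l k := chain_arc i l (by omega)
      have : u = chainX a b i l (k + 1) := Nat.eq_of_mul_eq_mul_left hb (by rw [hu, harc2])
      rwa [this]

lemma mem_randSet {n x : ℕ} (ω : Fin n → Bool) :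
    x ∈ randSet n ω ↔ ∃ i : Fin n, ω i = true ∧ (i : ℕ) + 1 = x := by
  simp [randSet]

lemma prob_even (a b n : ℕ) (ha : 0 < a) (hab : a < b) (hco : Nat.Coprime a b)
    {p : ℝ} (hp0 : 0 ≤ p) (hp1 : p ≤ 1) (j : ℕ) (hj1 : 1 ≤ j) {l : ℕ} (hl : ¬ b ∣ l)
    (hv : b ^ (2 * j - 1) * l ≤ n) :
    randMeasure n p {ω | evenDist a b (randSet n ω) (b ^ (2 * j - 1) * l)}
      = ∑ t ∈ Finset.range j, ENNReal.ofReal p ^ (2 * t + 1) * ENNReal.ofReal (1 - p) := by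
  set i := 2 * j - 1 with hidef
  have hb : 0 < b := lt_trans ha hab
  have hl0 : 0 < l := Nat.pos_of_ne_zero (fun h => hl (h ▸ dvd_zero b))
  have hiodd : Odd i := ⟨j - 1, by omega⟩
  have hx_pos : ∀ t, 0 < chainX a b i l t := fun t =>
    Nat.mul_pos (Nat.mul_pos (pow_pos hb _) (pow_pos ha _)) hl0
  have hx_le : ∀ t, t ≤ i → chainX a b i l t ≤ n := by
    intro t ht
    have h1 : chainX a b i l t ≤ b ^ i * l := by
      unfold chainX
      have : b ^ (i - t) * a ^ t ≤ b ^ (i - t) * b ^ t :=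
        Nat.mul_le_mul_left _ (Nat.pow_le_pow_left (le_of_lt hab) t)
      calc b ^ (i - t) * a ^ t * l ≤ b ^ (i - t) * b ^ t * l := Nat.mul_le_mul_right _ this
        _ = b ^ i * l := by rw [← pow_add]; congr 2; omega
    exact le_trans h1 hv
  have hx_anti : ∀ s t, s < t → t ≤ i → chainX a b i l t < chainX a b i l s := by
    have step : ∀ t, t + 1 ≤ i → chainX a b i l (t + 1) < chainX a b i l t := by
      intro t ht
      have harc := chain_arc (a := a) (b := b) i l ht
      have : a * chainX a b i l t < b * chainX a b i l t :=
        Nat.mul_lt_mul_of_lt_of_le hab le_rfl (hx_pos t)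
      have h2 : b * chainX a b i l (t + 1) < b * chainX a b i l t := by rw [harc]; exact this
      exact Nat.lt_of_mul_lt_mul_left h2
    intro s t hst hti
    induction t with
    | zero => omega
    | succ t ih =>
      rcases Nat.lt_or_ge s t with h | h
      · exact lt_trans (step t hti) (ih h (by omega))
      · have : s = t := by omega
        subst this; exact step s hti
  -- coordinates
  have hcoord : ∀ t, t ≤ i → chainX a b i l t - 1 < n := by
    intro t ht; have q1 := hx_le t ht; have q2 := hx_pos t; omega
  have hn0 : 0 < n := lt_of_lt_of_le (Nat.mul_pos (pow_pos hb _) hl0) hv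
  set e : ℕ → Fin n := fun t => if h : chainX a b i l t - 1 < n then ⟨_, h⟩ else
    ⟨0, hn0⟩ with hedef
  have he_val : ∀ t, t ≤ i → (e t : ℕ) = chainX a b i l t - 1 := by
    intro t ht; simp [hedef, hcoord t ht]
  have he_inj : ∀ s t, s ≤ i → t ≤ i → e s = e t → s = t := by
    intro s t hsi hti hee
    have h1 : chainX a b i l s = chainX a b i l t := by
      have heq := congrArg (fun x : Fin n => (x : ℕ)) hee
      simp only [he_val s hsi, he_val t hti] at heq
      have p1 := hx_pos s; have p2 := hx_pos t; omega
    rcases Nat.lt_trichotomy s t with h | h | h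
    · have := hx_anti s t h hti; omega
    · exact h
    · have := hx_anti t s h hsi; omega
  have hmem_iff : ∀ t (ht : t ≤ i) (ω : Fin n → Bool),
      (chainX a b i l t ∈ randSet n ω ↔ ω (e t) = true) := by
    intro t ht ω
    rw [mem_randSet]
    constructor
    · rintro ⟨q, hq, hq1⟩
      have : q = e t := by
        apply Fin.ext; rw [he_val t ht]; omega
      rwa [← this]
    · intro h
      exact ⟨e t, h, by rw [he_val t ht]; have := hx_pos t; omega⟩
  -- event decomposition
  have hset : {ω : Fin n → Bool | evenDist a b (randSet n ω) (b ^ i * l)}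
      = ⋃ t ∈ (Finset.range j : Finset ℕ),
          {ω | (∀ q ∈ (Finset.range (2 * t + 1)).image e, ω q = true)
            ∧ (∀ q ∈ ({e (2 * t + 1)} : Finset (Fin n)), ω q = false)} := by
    ext ω
    simp only [Set.mem_setOf_eq, Set.mem_iUnion, Finset.mem_coe, exists_prop]
    rw [evenDist_iff ha hab hco hl _ hiodd]
    constructor
    · rintro ⟨k, hev, hki, hmem, hnot⟩
      obtain ⟨t, rfl⟩ := hev
      have htj : t < j := by omega
      refine ⟨t, Finset.mem_range.mpr htj, ?_, ?_⟩
      · intro q hq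
        obtain ⟨s, hs, rfl⟩ := Finset.mem_image.mp hq
        have hs' := Finset.mem_range.mp hs
        rw [← hmem_iff s (by omega) ω]
        exact hmem s (by omega)
      · intro q hq
        rw [Finset.mem_singleton] at hq; subst hq
        have h3 := hnot
        rw [hmem_iff (t + t + 1) (by omega) ω] at h3
        have h2 : 2 * t + 1 = t + t + 1 := by omega
        rw [h2]
        simpa using h3
    · rintro ⟨t, htj, hA, hB⟩
      have htj' := Finset.mem_range.mp htj
      refine ⟨2 * t, ⟨t, by ring⟩, by omega, ?_, ?_⟩
      · intro s hs
        rw [hmem_iff s (by omega) ω]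
        exact hA (e s) (Finset.mem_image.mpr ⟨s, Finset.mem_range.mpr (by omega), rfl⟩)
      · rw [hmem_iff (2 * t + 1) (by omega) ω]
        simp [hB (e (2 * t + 1)) (Finset.mem_singleton_self _)]
  rw [hset]
  have hmeas : ∀ s : Set (Fin n → Bool), MeasurableSet s :=
    fun s => (Set.to_countable s).measurableSet
  rw [measure_biUnion_finset ?_ (fun t _ => hmeas _)]
  · apply Finset.sum_congr rfl
    intro t ht
    rw [Finset.mem_range] at ht
    have hAB : Disjoint ((Finset.range (2 * t + 1)).image e) ({e (2 * t + 1)} : Finset (Fin n)) := by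
      rw [Finset.disjoint_singleton_right]
      intro hmem2
      obtain ⟨s, hs, hse⟩ := Finset.mem_image.mp hmem2
      rw [Finset.mem_range] at hs
      have := he_inj s (2 * t + 1) (by omega) (by omega) hse
      omega
    rw [pattern_measure n hp0 hp1 _ _ hAB]
    have hcard : ((Finset.range (2 * t + 1)).image e).card = 2 * t + 1 := by
      rw [Finset.card_image_of_injOn, Finset.card_range]
      intro s hs s' hs' hss
      rw [Finset.mem_coe, Finset.mem_range] at hs hs'
      exact he_inj s s' (by omega) (by omega) hss
    rw [hcard, Finset.card_singleton, pow_one]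
  · -- pairwise disjoint
    intro t ht t' ht' hne
    simp only [Finset.coe_range, Set.mem_Iio] at ht ht'
    have key : ∀ s s' : ℕ, s < s' → s' < j → Disjoint
        {ω : Fin n → Bool | (∀ q ∈ (Finset.range (2 * s + 1)).image e, ω q = true)
          ∧ (∀ q ∈ ({e (2 * s + 1)} : Finset (Fin n)), ω q = false)}
        {ω : Fin n → Bool | (∀ q ∈ (Finset.range (2 * s' + 1)).image e, ω q = true)
          ∧ (∀ q ∈ ({e (2 * s' + 1)} : Finset (Fin n)), ω q = false)} := by
      intro s s' hss hs'j
      rw [Set.disjoint_left]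
      rintro ω ⟨_, hB⟩ ⟨hA', _⟩
      have h1 : ω (e (2 * s + 1)) = false := hB _ (Finset.mem_singleton_self _)
      have h2 : ω (e (2 * s + 1)) = true :=
        hA' _ (Finset.mem_image.mpr ⟨2 * s + 1, Finset.mem_range.mpr (by omega), rfl⟩)
      rw [h1] at h2; exact Bool.false_ne_true h2
    rcases Nat.lt_or_ge t t' with h | h
    · exact key t t' h ht'
    · have h' : t' < t := by omega
      exact (key t' t h' ht).symm

lemma count_nondvd (b m : ℕ) (hb : 1 < b) :
    ((Finset.Icc 1 m).filter fun l => ¬ b ∣ l).card = m - m / b := by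
  have h0 : Finset.Icc 1 m = Finset.Ioc 0 m := by rw [← Finset.Icc_add_one_left_eq_Ioc, zero_add]
  have h1 := Finset.card_filter_add_card_filter_not
    (s := Finset.Ioc 0 m) (p := fun l => b ∣ l)
  have h2 : ((Finset.Ioc 0 m).filter fun l => b ∣ l).card = m / b :=
    Nat.Ioc_filter_dvd_card_eq_div m b
  rw [h0]
  have h3 : (Finset.Ioc 0 m).card = m := by simp
  omega

lemma subpower_count (b i n : ℕ) (hb : 1 < b) :
    ((Finset.Icc 1 n).filter (isSubpower b i)).card = n / b ^ i - n / b ^ (i + 1) := by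
  have hbp : 0 < b ^ i := pow_pos (by omega) _
  have himg : (Finset.Icc 1 n).filter (isSubpower b i)
      = ((Finset.Icc 1 (n / b ^ i)).filter fun l => ¬ b ∣ l).image (fun l => b ^ i * l) := by
    ext v
    simp only [Finset.mem_filter, Finset.mem_Icc, Finset.mem_image]
    constructor
    · rintro ⟨⟨hv1, hv2⟩, l, rfl, hl⟩
      refine ⟨l, ⟨⟨?_, ?_⟩, hl⟩, rfl⟩
      · rcases Nat.eq_zero_or_pos l with h | h
        · subst h; simp at hv1
        · exact h
      · rw [Nat.le_div_iff_mul_le hbp, mul_comm]; exact hv2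
    · rintro ⟨l, ⟨⟨hl1, hl2⟩, hl⟩, rfl⟩
      rw [Nat.le_div_iff_mul_le hbp] at hl2
      refine ⟨⟨?_, by rw [mul_comm] at hl2; exact hl2⟩, l, rfl, hl⟩
      exact Nat.one_le_iff_ne_zero.mpr (by positivity)
  rw [himg, Finset.card_image_of_injective _ (fun x y h => Nat.eq_of_mul_eq_mul_left hbp h),
    count_nondvd _ _ hb, Nat.div_div_eq_div_mul, ← pow_succ]

theorem stmt6 (a b : ℕ) (ha : 0 < a) (hab : a < b) (hco : Nat.Coprime a b)
    (p : ℝ) (hp0 : 0 < p) (hp1 : p < 1) (n j : ℕ) (hn : 0 < n) (hj1 : 1 ≤ j)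
    (hj : (b : ℝ) ^ (2 * j) ≤ n) :
    |(∫ ω, (TstarCard a b n (2 * j - 1) (randSet n ω) : ℝ) ∂ randMeasure n p)
      - ((b - 1 : ℝ) / (b * (1 + p))) * p * n
          * (1 / (b : ℝ) ^ (2 * j - 1) - (p / b) ^ (2 * j - 1) * p)| ≤ 1 := by
  have hb : 0 < b := lt_trans ha hab
  set i := 2 * j - 1 with hidef
  have hi1 : 2 * j = i + 1 := by omega
  haveI hprob : IsProbabilityMeasure (bern p) := bern_prob hp0.le hp1.le
  haveI : IsProbabilityMeasure (randMeasure n p) := by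
    unfold randMeasure; infer_instance
  have hmeas : ∀ s : Set (Fin n → Bool), MeasurableSet s :=
    fun s => (Set.to_countable s).measurableSet
  -- step 1 : integral as a sum of probabilities
  have hint : (∫ ω, (TstarCard a b n i (randSet n ω) : ℝ) ∂ randMeasure n p)
      = ∑ v ∈ Finset.Icc 1 n,
          ((randMeasure n p) {ω | isSubpower b i v ∧ evenDist a b (randSet n ω) v}).toReal := by
    have h1 : ∀ ω : Fin n → Bool, ((TstarCard a b n i (randSet n ω) : ℝ))
        = ∑ v ∈ Finset.Icc 1 n,
            (if isSubpower b i v ∧ evenDist a b (randSet n ω) v then (1 : ℝ) else 0) := by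
      intro ω
      rw [TstarCard, Finset.card_filter]
      push_cast
      rfl
    calc (∫ ω, (TstarCard a b n i (randSet n ω) : ℝ) ∂ randMeasure n p)
        = ∫ ω, (∑ v ∈ Finset.Icc 1 n,
            (if isSubpower b i v ∧ evenDist a b (randSet n ω) v then (1 : ℝ) else 0))
            ∂ randMeasure n p := by simp only [h1]
      _ = ∑ v ∈ Finset.Icc 1 n, ∫ ω,
            (if isSubpower b i v ∧ evenDist a b (randSet n ω) v then (1 : ℝ) else 0)
            ∂ randMeasure n p :=
        integral_finset_sum _ (fun v _ => Integrable.of_finite)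
      _ = ∑ v ∈ Finset.Icc 1 n,
          ((randMeasure n p) {ω | isSubpower b i v ∧ evenDist a b (randSet n ω) v}).toReal := by
        apply Finset.sum_congr rfl
        intro v _
        have h2 : (fun ω => if isSubpower b i v ∧ evenDist a b (randSet n ω) v then (1:ℝ) else 0)
            = Set.indicator {ω | isSubpower b i v ∧ evenDist a b (randSet n ω) v}
              (fun _ => (1 : ℝ)) := by
          ext ω; simp [Set.indicator_apply]
        rw [h2, integral_indicator_const _ (hmeas _), smul_eq_mul, mul_one, measureReal_def]
  -- the per-vertex probability (real form)
  set P : ℝ := ∑ t ∈ Finset.range j, p ^ (2 * t + 1) * (1 - p) with hPdef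
  have hterm : ∀ v ∈ Finset.Icc 1 n,
      ((randMeasure n p) {ω | isSubpower b i v ∧ evenDist a b (randSet n ω) v}).toReal
        = if isSubpower b i v then P else 0 := by
    intro v hv
    rw [Finset.mem_Icc] at hv
    by_cases hsp : isSubpower b i v
    · obtain ⟨l, rfl, hl⟩ := hsp
      have hsp' : isSubpower b i (b ^ i * l) := ⟨l, rfl, hl⟩
      rw [if_pos hsp']
      have hEv : {ω : Fin n → Bool | isSubpower b i (b ^ i * l)
            ∧ evenDist a b (randSet n ω) (b ^ i * l)}
          = {ω | evenDist a b (randSet n ω) (b ^ i * l)} := by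
        ext ω; simp [hsp']
      rw [hEv, prob_even a b n ha hab hco hp0.le hp1.le j hj1 hl (by rw [← hidef]; exact hv.2)]
      rw [ENNReal.toReal_sum (fun t _ => by
        exact ENNReal.mul_ne_top (by simp [ENNReal.pow_ne_top]) ENNReal.ofReal_ne_top)]
      apply Finset.sum_congr rfl
      intro t _
      rw [ENNReal.toReal_mul, ENNReal.toReal_pow, ENNReal.toReal_ofReal hp0.le,
        ENNReal.toReal_ofReal (by linarith)]
    · rw [if_neg hsp]
      have hemp : {ω : Fin n → Bool | isSubpower b i v ∧ evenDist a b (randSet n ω) v} = ∅ := by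
        ext ω; simp [hsp]
      rw [hemp]
      simp
  rw [hint, Finset.sum_congr rfl hterm, ← Finset.sum_filter, Finset.sum_const,
    subpower_count b i n (by omega), nsmul_eq_mul]
  -- closed form for P
  have hp1' : (1 : ℝ) + p ≠ 0 := by linarith
  have hP : P = p * (1 - p ^ (i + 1)) / (1 + p) := by
    have hsq : (p ^ 2 : ℝ) ≠ 1 := by nlinarith
    have h1 : P = (p * (1 - p)) * ∑ t ∈ Finset.range j, (p ^ 2) ^ t := by
      rw [hPdef, Finset.mul_sum]
      apply Finset.sum_congr rfl
      intro t _
      rw [← pow_mul, pow_succ, pow_mul]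
      ring
    rw [h1, geom_sum_eq hsq, ← pow_mul, hi1]
    have hne : p ^ 2 - 1 ≠ 0 := sub_ne_zero.mpr hsq
    field_simp
    ring
  -- bounds on P
  have hppow : p ^ (i + 1) ≤ 1 := pow_le_one₀ hp0.le hp1.le
  have hppow0 : 0 ≤ p ^ (i + 1) := pow_nonneg hp0.le _
  have hP0 : 0 ≤ P := by
    rw [hP]
    apply div_nonneg (mul_nonneg hp0.le (by linarith)) (by linarith)
  have hP1 : P ≤ 1 := by
    rw [hP, div_le_one (by linarith)]
    nlinarith
  -- floors
  set A : ℕ := n / b ^ i with hA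
  set B : ℕ := n / b ^ (i + 1) with hB
  have hBA : B ≤ A := Nat.div_le_div_left (Nat.pow_le_pow_right (by omega) (by omega)) (pow_pos hb _)
  have hfloor : ∀ d : ℕ, 0 < d → ((n / d : ℕ) : ℝ) ≤ (n : ℝ) / (d : ℝ)
      ∧ (n : ℝ) / (d : ℝ) < ((n / d : ℕ) : ℝ) + 1 := by
    intro d hd
    have hd' : (0 : ℝ) < (d : ℝ) := by exact_mod_cast hd
    constructor
    · rw [le_div_iff₀ hd']
      exact_mod_cast Nat.div_mul_le_self n d
    · rw [div_lt_iff₀ hd']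
      have h2 : n < (n / d + 1) * d := by
        have h3 := Nat.div_add_mod n d
        have h4 := Nat.mod_lt n hd
        have h5 : (n / d + 1) * d = d * (n / d) + d := by ring
        omega
      exact_mod_cast h2
  have hbipos : 0 < b ^ i := pow_pos hb _
  have hbi1pos : 0 < b ^ (i + 1) := pow_pos hb _
  obtain ⟨hA1, hA2⟩ := hfloor (b ^ i) hbipos
  obtain ⟨hB1, hB2⟩ := hfloor (b ^ (i + 1)) hbi1pos
  rw [← hA] at hA1 hA2
  rw [← hB] at hB1 hB2
  -- real chain
  have hbR : (0 : ℝ) < (b : ℝ) := by exact_mod_cast hb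
  have hbiR : (0 : ℝ) < (b : ℝ) ^ i := by positivity
  have hbi1R : (0 : ℝ) < (b : ℝ) ^ (i + 1) := by positivity
  have hcastpow : ∀ m : ℕ, ((b ^ m : ℕ) : ℝ) = (b : ℝ) ^ m := by intro m; push_cast; ring
  rw [hcastpow i] at hA1 hA2
  rw [hcastpow (i+1)] at hB1 hB2
  set x : ℝ := (n : ℝ) / (b : ℝ) ^ i with hx
  set y : ℝ := (n : ℝ) / (b : ℝ) ^ (i + 1) with hy
  -- target equals P * (x - y)
  have htarget : ((b - 1 : ℝ) / (b * (1 + p))) * p * n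
      * (1 / (b : ℝ) ^ i - (p / b) ^ i * p) = P * (x - y) := by
    rw [hP, hx, hy, div_pow, pow_succ]
    field_simp
    ring
  rw [htarget]
  have hcastAB : ((A - B : ℕ) : ℝ) = (A : ℝ) - (B : ℝ) := Nat.cast_sub hBA
  rw [hcastAB]
  have key : |((A : ℝ) - B) - (x - y)| ≤ 1 := by
    rw [abs_le]; constructor <;> linarith
  calc |((A : ℝ) - B) * P - P * (x - y)| = |P * (((A : ℝ) - B) - (x - y))| := by ring_nf
    _ = P * |((A : ℝ) - B) - (x - y)| := by rw [abs_mul, abs_of_nonneg hP0]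
    _ ≤ 1 * 1 := by
        apply mul_le_mul hP1 key (abs_nonneg _) (by norm_num)
    _ = 1 := by norm_num
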